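/- Let X be a polyhedral normed space and f : X → X nonexpansive. Call E ⊆ B_{X*} locked if there exist v, w ∈ S_E(f) with J(v−w) = E, and minimal locked if in addition no proper subset of E is locked. If f is also real analytic and E is a minimal locked set, then S_E(f) = x + L_E for any x ∈ S_E(f). -/

import Mathlib

open Set

section AuxLemmas

variable {X : Type*} [NormedAddCommGroup X] [NormedSpace ℝ X]

lemma apply_le_norm (φ : X →L[ℝ] ℝ) (hφ : ‖φ‖ ≤ 1) (u : X) : φ u ≤ ‖u‖ := by
  have h := φ.le_opNorm u
  have h2 : φ u ≤ ‖φ u‖ := by rw [Real.norm_eq_abs]; exact le_abs_self _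
  nlinarith [norm_nonneg u]

lemma exists_extreme_attains' [FiniteDimensional ℝ X]
    (hpoly : (Set.extremePoints ℝ {φ : X →L[ℝ] ℝ | ‖φ‖ ≤ 1}).Finite) (u : X) :
    ∃ ψ ∈ Set.extremePoints ℝ {φ : X →L[ℝ] ℝ | ‖φ‖ ≤ 1}, ψ u = ‖u‖ := by
  set B : Set (X →L[ℝ] ℝ) := {φ | ‖φ‖ ≤ 1} with hB
  have hBall : B = Metric.closedBall 0 1 := by
    ext φ; simp [hB, Metric.mem_closedBall, dist_zero_right]
  have hBcomp : IsCompact B := by rw [hBall]; exact isCompact_closedBall _ _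
  have hBconv : Convex ℝ B := by rw [hBall]; exact convex_closedBall _ _
  have hKM := closure_convexHull_extremePoints hBcomp hBconv
  obtain ⟨g, hg1, hg2⟩ := exists_dual_vector'' ℝ u
  have hg2' : g u = ‖u‖ := by simpa using hg2
  have hAne : (Set.extremePoints ℝ B).Nonempty := by
    by_contra h
    rw [Set.not_nonempty_iff_eq_empty] at h
    rw [h] at hKM
    simp only [convexHull_empty, closure_empty] at hKM
    have : (0 : X →L[ℝ] ℝ) ∈ B := by simp [hB]
    rw [← hKM] at this; exact this
  have hAne' : hpoly.toFinset.Nonempty := by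
    obtain ⟨ψ, hψ⟩ := hAne; exact ⟨ψ, hpoly.mem_toFinset.2 hψ⟩
  obtain ⟨ψ₀, hψ₀A, hψ₀max⟩ := hpoly.toFinset.exists_max_image (fun ψ : X →L[ℝ] ℝ => ψ u) hAne'
  have hψ₀A' : ψ₀ ∈ Set.extremePoints ℝ B := hpoly.mem_toFinset.1 hψ₀A
  have hψ₀B : ψ₀ ∈ B := extremePoints_subset hψ₀A'
  refine ⟨ψ₀, hψ₀A', le_antisymm (apply_le_norm ψ₀ hψ₀B u) ?_⟩
  have hgB : g ∈ B := hg1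
  rw [← hKM] at hgB
  have hclosed : IsClosed {φ : X →L[ℝ] ℝ | φ u ≤ ψ₀ u} := by
    have : Continuous fun φ : X →L[ℝ] ℝ => φ u :=
      (ContinuousLinearMap.apply ℝ ℝ u).continuous
    exact isClosed_le this continuous_const
  have hconv : Convex ℝ {φ : X →L[ℝ] ℝ | φ u ≤ ψ₀ u} := by
    refine convex_halfSpace_le ⟨fun a b => by simp, fun c a => by simp⟩ _
  have hsub : Set.extremePoints ℝ B ⊆ {φ : X →L[ℝ] ℝ | φ u ≤ ψ₀ u} := fun ψ hψ =>
    hψ₀max ψ (hpoly.mem_toFinset.2 hψ)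
  have := closure_minimal (convexHull_min hsub hconv) hclosed hgB
  rw [← hg2']; exact this

lemma key_asymp [FiniteDimensional ℝ X]
    (hpoly : (Set.extremePoints ℝ {φ : X →L[ℝ] ℝ | ‖φ‖ ≤ 1}).Finite)
    (z c : X) :
    ∃ ψ₀ : X →L[ℝ] ℝ, (‖ψ₀‖ ≤ 1 ∧ ψ₀ z = ‖z‖) ∧ ∃ T₀ : ℝ, 0 ≤ T₀ ∧
      ∀ t : ℝ, T₀ ≤ t → ‖c + t • z‖ = ψ₀ c + t * ‖z‖ := by
  classical
  set A : Finset (X →L[ℝ] ℝ) := hpoly.toFinset with hA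
  have hnorm_le : ∀ ψ ∈ A, ∀ u : X, ψ u ≤ ‖u‖ := by
    intro ψ hψ u
    exact apply_le_norm ψ
      (extremePoints_subset (hpoly.mem_toFinset.1 hψ) : _ ∈ {φ : X →L[ℝ] ℝ | ‖φ‖ ≤ 1}) u
  set S : Finset (X →L[ℝ] ℝ) := A.filter (fun ψ => ψ z = ‖z‖) with hS
  have hSne : S.Nonempty := by
    obtain ⟨ψ, hψ1, hψ2⟩ := exists_extreme_attains' hpoly z
    exact ⟨ψ, Finset.mem_filter.2 ⟨hpoly.mem_toFinset.2 hψ1, hψ2⟩⟩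
  obtain ⟨ψ₀, hψ₀S, hψ₀max⟩ := S.exists_max_image (fun ψ : X →L[ℝ] ℝ => ψ c) hSne
  have hψ₀A : ψ₀ ∈ A := (Finset.mem_filter.1 hψ₀S).1
  have hψ₀z : ψ₀ z = ‖z‖ := (Finset.mem_filter.1 hψ₀S).2
  have hψ₀n : ‖ψ₀‖ ≤ 1 :=
    (extremePoints_subset (hpoly.mem_toFinset.1 hψ₀A) : _ ∈ {φ : X →L[ℝ] ℝ | ‖φ‖ ≤ 1})
  set g : (X →L[ℝ] ℝ) → ℝ := fun ψ =>
    if ψ z = ‖z‖ then 0 else (ψ c - ψ₀ c) / (‖z‖ - ψ z) with hg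
  have hAne : A.Nonempty := ⟨ψ₀, hψ₀A⟩
  set T₀ : ℝ := max 0 (A.sup' hAne g) with hT₀
  refine ⟨ψ₀, ⟨hψ₀n, hψ₀z⟩, T₀, le_max_left _ _, ?_⟩
  intro t ht
  have hkey : ∀ ψ ∈ A, ψ c + t * ψ z ≤ ψ₀ c + t * ‖z‖ := by
    intro ψ hψ
    by_cases hzz : ψ z = ‖z‖
    · have : ψ c ≤ ψ₀ c := hψ₀max ψ (Finset.mem_filter.2 ⟨hψ, hzz⟩)
      rw [hzz]; linarith
    · have hlt : ψ z < ‖z‖ := lt_of_le_of_ne (hnorm_le ψ hψ z) hzz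
      have hgap : 0 < ‖z‖ - ψ z := by linarith
      have hge : (ψ c - ψ₀ c) / (‖z‖ - ψ z) ≤ t := by
        refine le_trans ?_ ht
        refine le_trans ?_ (le_max_right 0 (A.sup' hAne g))
        have := Finset.le_sup' g hψ
        refine le_trans (le_of_eq ?_) this
        simp [hg, hzz]
      have := (div_le_iff₀ hgap).1 hge
      nlinarith
  apply le_antisymm
  · obtain ⟨ψ, hψ1, hψ2⟩ := exists_extreme_attains' hpoly (c + t • z)
    have hψA : ψ ∈ A := hpoly.mem_toFinset.2 hψ1
    have hev : ψ (c + t • z) = ψ c + t * ψ z := by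
      simp [map_add, map_smul, smul_eq_mul]
    rw [← hψ2, hev]; exact hkey ψ hψA
  · have hev : ψ₀ (c + t • z) = ψ₀ c + t * ‖z‖ := by
      simp [map_add, map_smul, smul_eq_mul, hψ₀z]
    rw [← hev]
    exact apply_le_norm ψ₀ hψ₀n _

lemma line_mem_SE (f : X → X) (hf_an : ∀ p : X, AnalyticAt ℝ f p)
    (hf : ∀ u v : X, ‖f u - f v‖ ≤ ‖u - v‖) (z w : X)
    (hw : ∀ φ : X →L[ℝ] ℝ, ‖φ‖ ≤ 1 → φ z = ‖z‖ → φ (f w) = φ w)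
    (hv : ∀ φ : X →L[ℝ] ℝ, ‖φ‖ ≤ 1 → φ z = ‖z‖ → φ (f (w + z)) = φ (w + z)) :
    ∀ t : ℝ, ∀ φ : X →L[ℝ] ℝ, ‖φ‖ ≤ 1 → φ z = ‖z‖ →
      φ (f (w + t • z)) = φ (w + t • z) := by
  intro t φ hφ1 hφ2
  set g : ℝ → ℝ := fun s => φ (f (w + s • z)) - φ (w + s • z) with hgdef
  have mono : ∀ s u : ℝ, s ≤ u → g u ≤ g s := by
    intro s u hsu
    have h3 : (w + u • z) - (w + s • z) = (u - s) • z := by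
      rw [sub_smul]; abel
    have h2 := hf (w + u • z) (w + s • z)
    rw [h3, norm_smul, Real.norm_eq_abs, abs_of_nonneg (sub_nonneg.2 hsu)] at h2
    have h1 : φ (f (w + u • z)) - φ (f (w + s • z)) ≤ (u - s) * ‖z‖ := by
      have := apply_le_norm φ hφ1 (f (w + u • z) - f (w + s • z))
      rw [map_sub] at this
      linarith
    have h4 : φ (w + u • z) - φ (w + s • z) = (u - s) * ‖z‖ := by
      simp only [map_add, map_smul, smul_eq_mul, hφ2]; ring
    simp only [hgdef]; linarith
  have g0 : g 0 = 0 := by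
    simp only [hgdef, zero_smul, add_zero]
    rw [hw φ hφ1 hφ2]; ring
  have g1 : g 1 = 0 := by
    simp only [hgdef, one_smul]
    rw [hv φ hφ1 hφ2]; ring
  have gIcc : ∀ s ∈ Set.Icc (0:ℝ) 1, g s = 0 := fun s hs =>
    le_antisymm (g0 ▸ mono 0 s hs.1) (g1 ▸ mono s 1 hs.2)
  have gan : AnalyticOnNhd ℝ g Set.univ := by
    intro s _
    have hcurve : AnalyticAt ℝ (fun s : ℝ => w + s • z) s := by
      exact analyticAt_const.add
        ((ContinuousLinearMap.smulRight (ContinuousLinearMap.id ℝ ℝ) z).analyticAt s)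
    have hfc : AnalyticAt ℝ (fun s : ℝ => f (w + s • z)) s := (hf_an _).comp hcurve
    exact ((φ.analyticAt _).comp hfc).sub ((φ.analyticAt _).comp hcurve)
  have heq : Set.EqOn g (fun _ => 0) Set.univ := by
    apply AnalyticOnNhd.eqOn_of_preconnected_of_eventuallyEq gan
      analyticOnNhd_const isPreconnected_univ (Set.mem_univ (1/2 : ℝ))
    have hmem : Set.Icc (0:ℝ) 1 ∈ nhds (1/2 : ℝ) := Icc_mem_nhds (by norm_num) (by norm_num)
    filter_upwards [hmem] with s hs
    exact gIcc s hs
  have := heq (Set.mem_univ t)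
  simp only [hgdef] at this
  linarith [this]

end AuxLemmas

/-- The duality map: `J z` is the set of dual-unit-ball functionals attaining the norm at `z`. -/
def dualityMap {X : Type*} [NormedAddCommGroup X] [NormedSpace ℝ X] (z : X) :
    Set (X →L[ℝ] ℝ) := {φ | ‖φ‖ ≤ 1 ∧ φ z = ‖z‖}

/-- `S_E(f)`: points where `f` preserves the value of every functional in `E`. -/
def SE {X : Type*} [NormedAddCommGroup X] [NormedSpace ℝ X]
    (f : X → X) (E : Set (X →L[ℝ] ℝ)) : Set X :=
  {x | ∀ φ ∈ E, φ (f x) = φ x}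

/-- `E` is locked for `f` if there are `v, w ∈ S_E(f)` with `J(v-w) = E`. -/
def Locked {X : Type*} [NormedAddCommGroup X] [NormedSpace ℝ X]
    (f : X → X) (E : Set (X →L[ℝ] ℝ)) : Prop :=
  ∃ v ∈ SE f E, ∃ w ∈ SE f E, dualityMap (v - w) = E

theorem stmt_7 {X : Type*} [NormedAddCommGroup X] [NormedSpace ℝ X]
    [FiniteDimensional ℝ X]
    (hpoly : (Set.extremePoints ℝ {φ : X →L[ℝ] ℝ | ‖φ‖ ≤ 1}).Finite)
    (f : X → X) (hf_an : ∀ x : X, AnalyticAt ℝ f x)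
    (hf : ∀ u v : X, ‖f u - f v‖ ≤ ‖u - v‖)
    (E : Set (X →L[ℝ] ℝ)) (hE : E ⊆ {φ : X →L[ℝ] ℝ | ‖φ‖ ≤ 1})
    (hlocked : Locked f E) (hmin : ∀ G ⊂ E, ¬ Locked f G)
    (x : X) (hx : x ∈ SE f E) :
    SE f E = (fun z => x + z) '' {u : X | ∀ φ ∈ E, ∀ ψ ∈ E, φ u = ψ u} := by
  classical
  obtain ⟨v, hv, w, hw, hzE⟩ := hlocked
  subst hzE
  set z := v - w with hzdef
  by_cases hz0 : z = 0
  · -- degenerate case: E is the whole dual ball, SE f E is the fixed point set {x}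
    have hEball : dualityMap z = {φ : X →L[ℝ] ℝ | ‖φ‖ ≤ 1} := by
      ext φ; simp [dualityMap, hz0]
    have hfix : ∀ y ∈ SE f (dualityMap z), f y = y := by
      intro y hy
      obtain ⟨g, hg1, hg2⟩ := exists_dual_vector'' ℝ (f y - y)
      have hg2' : g (f y - y) = ‖f y - y‖ := by simpa using hg2
      have hgE : g ∈ dualityMap z := by rw [hEball]; exact hg1
      have h3 := hy g hgE
      have h4 : ‖f y - y‖ = 0 := by rw [← hg2', map_sub, h3, sub_self]
      exact sub_eq_zero.1 (norm_eq_zero.1 h4)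
    ext y
    constructor
    · intro hy
      have hyx : y = x := by
        by_contra hne
        have hpos : (0:ℝ) < ‖y - x‖ := norm_pos_iff.2 (sub_ne_zero.2 hne)
        obtain ⟨g0, hg01, hg02⟩ := exists_dual_vector'' ℝ (y - x)
        have hg02' : g0 (y - x) = ‖y - x‖ := by simpa using hg02
        have hprop : dualityMap (y - x) ⊂ dualityMap z := by
          rw [hEball]
          refine ssubset_iff_subset_ne.2 ⟨fun χ hχ => hχ.1, ?_⟩
          intro heq
          have hmem : -g0 ∈ dualityMap (y - x) := by
            rw [heq]; simpa using hg01
          have := hmem.2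
          rw [ContinuousLinearMap.neg_apply, hg02'] at this
          linarith
        refine hmin _ hprop ⟨y, ?_, x, ?_, rfl⟩
        · intro χ hχ; rw [hfix y hy]
        · intro χ hχ; rw [hfix x hx]
      refine ⟨0, ?_, by rw [hyx]; simp⟩
      intro φ _ ψ _; simp
    · rintro ⟨u, hu, rfl⟩
      have hu0 : u = 0 := by
        obtain ⟨g, hg1, hg2⟩ := exists_dual_vector'' ℝ u
        have hg2' : g u = ‖u‖ := by simpa using hg2
        have hgE : g ∈ dualityMap z := by rw [hEball]; exact hg1
        have h0E : (0 : X →L[ℝ] ℝ) ∈ dualityMap z := by rw [hEball]; simp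
        have := hu g hgE 0 h0E
        simp only [ContinuousLinearMap.zero_apply] at this
        rw [this] at hg2'
        exact norm_eq_zero.1 hg2'.symm
      simpa [hu0] using hx
  · -- main case : z ≠ 0
    have hline : ∀ t : ℝ, ∀ φ ∈ dualityMap z, φ (f (w + t • z)) = φ (w + t • z) := by
      intro t φ hφ
      refine line_mem_SE f hf_an hf z w ?_ ?_ t φ hφ.1 hφ.2
      · intro χ h1 h2; exact hw χ ⟨h1, h2⟩
      · intro χ h1 h2
        have hwz : w + z = v := by rw [hzdef]; abel
        rw [hwz]; exact hv χ ⟨h1, h2⟩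
    have lem2 : ∀ y ∈ SE f (dualityMap z), ∀ φ ∈ dualityMap z, ∀ ψ ∈ dualityMap z,
        φ (y - w) = ψ (y - w) := by
      suffices h : ∀ y ∈ SE f (dualityMap z), ∃ r : ℝ, ∀ φ ∈ dualityMap z, φ (y - w) = r by
        intro y hy φ hφ ψ hψ
        obtain ⟨r, hr⟩ := h y hy
        rw [hr φ hφ, hr ψ hψ]
      intro y hy
      obtain ⟨ψ₀, hψ₀, T₀, hT₀0, hkey⟩ := key_asymp hpoly z (y - w)
      refine ⟨ψ₀ (y - w), ?_⟩
      intro φ hφ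
      set T : ℝ := T₀ + 1 with hT
      have hchar : ∀ χ ∈ dualityMap ((y - w) + T • z),
          (‖χ‖ ≤ 1 ∧ χ z = ‖z‖) ∧ χ (y - w) = ψ₀ (y - w) := by
        intro χ hχ
        obtain ⟨hχ1, hχ2⟩ := hχ
        have e1 : ‖(y - w) + T • z‖ = ψ₀ (y - w) + T * ‖z‖ :=
          hkey T (by rw [hT]; linarith)
        have e2 : χ ((y - w) + T₀ • z) ≤ ψ₀ (y - w) + T₀ * ‖z‖ := by
          rw [← hkey T₀ le_rfl]; exact apply_le_norm χ hχ1 _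
        have e3 : χ (y - w) + T * χ z = ψ₀ (y - w) + T * ‖z‖ := by
          have := hχ2.trans e1
          simpa [map_add, map_smul, smul_eq_mul] using this
        have e4 : χ (y - w) + T₀ * χ z ≤ ψ₀ (y - w) + T₀ * ‖z‖ := by
          simpa [map_add, map_smul, smul_eq_mul] using e2
        have e5 : χ z ≤ ‖z‖ := apply_le_norm χ hχ1 z
        rw [hT] at e3
        have e6 : χ z = ‖z‖ := by nlinarith
        refine ⟨⟨hχ1, e6⟩, ?_⟩
        rw [e6] at e3; linarith
      have hGE : dualityMap ((y - w) + T • z) = dualityMap z := by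
        by_contra hne
        refine hmin _ (ssubset_iff_subset_ne.2 ⟨fun χ hχ => (hchar χ hχ).1, hne⟩) ?_
        refine ⟨y, ?_, w - T • z, ?_, ?_⟩
        · intro χ hχ; exact hy χ (hchar χ hχ).1
        · intro χ hχ
          have h1 : w - T • z = w + (-T) • z := by rw [neg_smul]; abel
          rw [h1]; exact hline (-T) χ (hchar χ hχ).1
        · abel_nf
      have hφG : φ ∈ dualityMap ((y - w) + T • z) := by rw [hGE]; exact hφ
      exact (hchar φ hφG).2
    ext y
    constructor
    · intro hy
      refine ⟨y - x, ?_, by show x + (y - x) = y; abel⟩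
      intro φ hφ ψ hψ
      have h1 := lem2 y hy φ hφ ψ hψ
      have h2 := lem2 x hx φ hφ ψ hψ
      have e1 : φ (y - x) = φ (y - w) - φ (x - w) := by
        rw [map_sub, map_sub, map_sub]; ring
      have e2 : ψ (y - x) = ψ (y - w) - ψ (x - w) := by
        rw [map_sub, map_sub, map_sub]; ring
      rw [e1, e2, h1, h2]
    · rintro ⟨u, hu, rfl⟩
      show (x + u) ∈ SE f (dualityMap z)
      intro φ hφ
      obtain ⟨hφ1, hφ2⟩ := hφ
      obtain ⟨ψ₁, hψ₁, T₁, hT₁0, hkey₁⟩ := key_asymp hpoly z ((x - w) + u)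
      obtain ⟨ψ₂, hψ₂, T₂, hT₂0, hkey₂⟩ := key_asymp hpoly z ((w - x) - u)
      have hagree1 : φ (x - w) = ψ₁ (x - w) := lem2 x hx φ ⟨hφ1, hφ2⟩ ψ₁ hψ₁
      have hagreeu1 : φ u = ψ₁ u := hu φ ⟨hφ1, hφ2⟩ ψ₁ hψ₁
      have hagree2 : φ (x - w) = ψ₂ (x - w) := lem2 x hx φ ⟨hφ1, hφ2⟩ ψ₂ hψ₂
      have hagreeu2 : φ u = ψ₂ u := hu φ ⟨hφ1, hφ2⟩ ψ₂ hψ₂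
      have hb : ∀ χ ∈ dualityMap z, χ (f (w - T₁ • z)) = χ (w - T₁ • z) := by
        intro χ hχ
        have h1 : w - T₁ • z = w + (-T₁) • z := by rw [neg_smul]; abel
        rw [h1]; exact hline (-T₁) χ hχ
      have hb' : ∀ χ ∈ dualityMap z, χ (f (w + T₂ • z)) = χ (w + T₂ • z) :=
        fun χ hχ => hline T₂ χ hχ
      -- upper bound
      have d1 : (x + u) - (w - T₁ • z) = ((x - w) + u) + T₁ • z := by abel
      have e1 : φ ((x + u) - (w - T₁ • z)) = ‖(x + u) - (w - T₁ • z)‖ := by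
        rw [d1, hkey₁ T₁ le_rfl]
        simp only [map_add, map_smul, smul_eq_mul, hφ2]
        linarith
      have up : φ (f (x + u)) ≤ φ (x + u) := by
        have h5 := hf (x + u) (w - T₁ • z)
        have h6 : φ (f (x + u)) - φ (f (w - T₁ • z)) ≤ ‖(x + u) - (w - T₁ • z)‖ := by
          have h7 := apply_le_norm φ hφ1 (f (x + u) - f (w - T₁ • z))
          rw [map_sub] at h7; linarith
        have h8 := hb φ ⟨hφ1, hφ2⟩
        have h9 : φ ((x + u) - (w - T₁ • z)) = φ (x + u) - φ (w - T₁ • z) := map_sub φ _ _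
        linarith [e1.symm.trans h9]
      -- lower bound
      have d2 : (w + T₂ • z) - (x + u) = ((w - x) - u) + T₂ • z := by abel
      have e2 : φ ((w + T₂ • z) - (x + u)) = ‖(w + T₂ • z) - (x + u)‖ := by
        rw [d2, hkey₂ T₂ le_rfl]
        simp only [map_add, map_sub, map_smul, smul_eq_mul, hφ2]
        linarith [hagree2, hagreeu2, map_sub φ x w, map_sub ψ₂ x w]
      have low : φ (x + u) ≤ φ (f (x + u)) := by
        have h5 := hf (w + T₂ • z) (x + u)
        have h6 : φ (f (w + T₂ • z)) - φ (f (x + u)) ≤ ‖(w + T₂ • z) - (x + u)‖ := by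
          have h7 := apply_le_norm φ hφ1 (f (w + T₂ • z) - f (x + u))
          rw [map_sub] at h7; linarith
        have h8 := hb' φ ⟨hφ1, hφ2⟩
        have h9 : φ ((w + T₂ • z) - (x + u)) = φ (w + T₂ • z) - φ (x + u) := map_sub φ _ _
        linarith [e2.symm.trans h9]
      linarith
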